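/- Let G be a connected multigraph on n ≥ 2 vertices with minimum cut value c, where c is even, and let C_n denote the multigraph on vertices 0, 1, …, n−1 arranged in a cycle with exactly c/2 parallel edges between each pair of consecutive vertices (indices mod n). Suppose in each graph every edge fails independently with probability p ∈ [0,1], and for a multigraph H let FAIL_r(H, p) denote the probability that the surviving graph has r or more connected components. Then for every integer r, FAIL_r(G, p) ≤ FAIL_r(C_n, p). -/

import Mathlib

open scoped Classical

/-- A multigraph on vertex type `V` is given by an edge-index type `E` together with a map
`ends : E → Sym2 V` assigning to each edge its (unordered) pair of endpoints; the hypothesis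
`∀ e, ¬ (ends e).IsDiag` says that the two endpoints of every edge are distinct.
`survGraph ends F` is the simple graph on `V` whose adjacencies are given by the edges of the
multigraph that survive when the edges in `F` fail. -/
def survGraph {V E : Type} (ends : E → Sym2 V) (F : Finset E) : SimpleGraph V :=
  SimpleGraph.fromRel (fun x y => ∃ e, e ∉ F ∧ ends e = s(x, y))

/-- The number of connected components of the graph surviving after the edges in `F` fail. -/
noncomputable def numComponents {V E : Type} (ends : E → Sym2 V) (F : Finset E) : ℕ :=
  Nat.card (survGraph ends F).ConnectedComponent

/-- Edge `e` crosses the 2-way cut determined by the vertex set `A` (one endpoint in `A`,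
one endpoint outside `A`). -/
def crosses {V E : Type} (ends : E → Sym2 V) (A : Finset V) (e : E) : Prop :=
  (∃ x ∈ ends e, x ∈ A) ∧ (∃ x ∈ ends e, x ∉ A)

/-- The edge set of the 2-way cut determined by the vertex set `A`. -/
noncomputable def cutEdges {V E : Type} [Fintype E] (ends : E → Sym2 V) (A : Finset V) :
    Finset E :=
  Finset.univ.filter (crosses ends A)

/-- The value of the 2-way cut determined by the vertex set `A`. -/
noncomputable def cutValue {V E : Type} [Fintype E] (ends : E → Sym2 V) (A : Finset V) : ℕ :=
  (cutEdges ends A).card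

/-- When each edge fails independently with probability `p`, this is the probability that the
(random) set of failed edges is a member of `S`. -/
noncomputable def failurePr {E : Type} [Fintype E] (p : ℝ) (S : Finset (Finset E)) : ℝ :=
  ∑ F ∈ S, p ^ F.card * (1 - p) ^ (Fintype.card E - F.card)

/-- The cycle multigraph on the `n` vertices `0, 1, …, n-1` with exactly `b` parallel edges
between each pair of consecutive vertices (indices mod `n`): edge `(i, j)` joins `i` to
`i + 1 (mod n)`. -/
def cycleEnds (n b : ℕ) : Fin n × Fin b → Sym2 (Fin n) :=
  fun ei => s(ei.1, finRotate n ei.1)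

section Basics
set_option linter.unusedSectionVars false
variable {V E : Type} [Fintype V] [DecidableEq V] [Fintype E] [DecidableEq E] (ends : E → Sym2 V)

lemma survGraph_mono {F F' : Finset E} (h : F' ⊆ F) :
    survGraph ends F ≤ survGraph ends F' := by
  intro x y hxy
  rw [survGraph, SimpleGraph.fromRel_adj] at hxy ⊢
  refine ⟨hxy.1, ?_⟩
  rcases hxy.2 with ⟨e, he, hee⟩ | ⟨e, he, hee⟩
  · exact Or.inl ⟨e, fun hc => he (h hc), hee⟩
  · exact Or.inr ⟨e, fun hc => he (h hc), hee⟩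

noncomputable def compMap {F F' : Finset E} (h : F' ⊆ F) :
    (survGraph ends F).ConnectedComponent → (survGraph ends F').ConnectedComponent :=
  SimpleGraph.ConnectedComponent.map
    (SimpleGraph.Hom.ofLE (survGraph_mono ends h))

lemma compMap_mk {F F' : Finset E} (h : F' ⊆ F) (v : V) :
    compMap ends h ((survGraph ends F).connectedComponentMk v)
      = (survGraph ends F').connectedComponentMk v := by
  simp [compMap]

lemma compMap_surj {F F' : Finset E} (h : F' ⊆ F) :
    Function.Surjective (compMap ends h) := by
  intro c
  obtain ⟨v, rfl⟩ := c.exists_rep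
  exact ⟨(survGraph ends F).connectedComponentMk v, compMap_mk ends h v⟩

lemma numComponents_erase_le {F : Finset E} {e : E} :
    numComponents ends (F.erase e) ≤ numComponents ends F :=
  Nat.card_le_card_of_surjective _ (compMap_surj ends (Finset.erase_subset e F))

lemma numComponents_mono {F F' : Finset E} (h : F' ⊆ F) :
    numComponents ends F' ≤ numComponents ends F :=
  Nat.card_le_card_of_surjective _ (compMap_surj ends h)

lemma numComponents_le_card (F : Finset E) :
    numComponents ends F ≤ Fintype.card V := by
  have : Function.Surjective ((survGraph ends F).connectedComponentMk) :=
    fun c => c.exists_rep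
  simpa [numComponents, Nat.card_eq_fintype_card] using
    Nat.card_le_card_of_surjective _ this

lemma one_le_numComponents [Nonempty V] (F : Finset E) :
    1 ≤ numComponents ends F := by
  have : Nonempty (survGraph ends F).ConnectedComponent :=
    ⟨(survGraph ends F).connectedComponentMk (Classical.arbitrary V)⟩
  exact Nat.card_pos

/-- erasing a surviving edge whose two endpoints lie in different components
strictly decreases the number of components. -/
lemma numComponents_erase_lt {F : Finset E} {e : E} (he : e ∈ F) {x y : V}
    (hxy : ends e = s(x, y)) (hne : x ≠ y)
    (hc : (survGraph ends F).connectedComponentMk x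
        ≠ (survGraph ends F).connectedComponentMk y) :
    numComponents ends (F.erase e) < numComponents ends F := by
  classical
  have hFsub : F.erase e ⊆ F := Finset.erase_subset e F
  have hAdj : (survGraph ends (F.erase e)).Adj x y := by
    rw [survGraph, SimpleGraph.fromRel_adj]
    exact ⟨hne, Or.inl ⟨e, Finset.notMem_erase e F, hxy⟩⟩
  have hqeq : compMap ends hFsub ((survGraph ends F).connectedComponentMk x)
      = compMap ends hFsub ((survGraph ends F).connectedComponentMk y) := by
    rw [compMap_mk, compMap_mk]
    exact SimpleGraph.ConnectedComponent.eq.2 hAdj.reachable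
  have hninj : ¬ Function.Injective (compMap ends hFsub) := fun hinj => hc (hinj hqeq)
  -- finite cardinalities
  have := Fintype.ofFinite (survGraph ends F).ConnectedComponent
  have := Fintype.ofFinite (survGraph ends (F.erase e)).ConnectedComponent
  rw [numComponents, numComponents, Nat.card_eq_fintype_card, Nat.card_eq_fintype_card]
  have hle := Fintype.card_le_of_surjective _ (compMap_surj ends hFsub)
  rcases lt_or_eq_of_le hle with hlt | heq
  · exact hlt
  · exact absurd ((Fintype.bijective_iff_surjective_and_card _).2
      ⟨compMap_surj ends hFsub, heq.symm⟩).injective hninj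

lemma numComponents_univ : numComponents ends (Finset.univ : Finset E) = Fintype.card V := by
  classical
  have hbot : survGraph ends (Finset.univ : Finset E) = ⊥ := by
    ext x y
    simp [survGraph, SimpleGraph.fromRel_adj]
  rw [numComponents, hbot]
  have hinj : Function.Injective ((⊥ : SimpleGraph V).connectedComponentMk) := by
    intro u v huv
    have := SimpleGraph.ConnectedComponent.eq.1 huv
    rcases this with ⟨w⟩
    cases w with
    | nil => rfl
    | cons h _ => exact absurd h (by simp)
  have hsurj : Function.Surjective ((⊥ : SimpleGraph V).connectedComponentMk) :=
    fun c => c.exists_rep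
  rw [← Nat.card_eq_of_bijective _ ⟨hinj, hsurj⟩, Nat.card_eq_fintype_card]

lemma numComponents_empty_of_connected (h : (survGraph ends (∅ : Finset E)).Connected) :
    numComponents ends (∅ : Finset E) = 1 := by
  rw [numComponents]
  have : Subsingleton (survGraph ends (∅ : Finset E)).ConnectedComponent := by
    constructor
    intro a b
    obtain ⟨u, rfl⟩ := a.exists_rep
    obtain ⟨v, rfl⟩ := b.exists_rep
    exact SimpleGraph.ConnectedComponent.eq.2 (h.preconnected u v)
  have hne : Nonempty (survGraph ends (∅ : Finset E)).ConnectedComponent := by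
    have : Nonempty V := h.nonempty
    exact ⟨(survGraph ends (∅ : Finset E)).connectedComponentMk (Classical.arbitrary V)⟩
  exact Nat.card_eq_one_iff_unique.2 ⟨this, hne⟩

end Basics
section Poly
set_option linter.unusedSectionVars false
variable {V E : Type} [Fintype V] [DecidableEq V] [Fintype E] [DecidableEq E] (ends : E → Sym2 V)

noncomputable def wgt (p : ℝ) (F : Finset E) : ℝ :=
  p ^ F.card * (1 - p) ^ (Fintype.card E - F.card)

noncomputable def phiI (r : ℕ) (F : Finset E) : ℝ :=
  if r ≤ numComponents ends F then 1 else 0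

noncomputable def Ufun (r : ℕ) (p : ℝ) : ℝ :=
  ∑ F : Finset E, phiI ends r F * wgt p F

lemma wgt_nonneg {p : ℝ} (hp0 : 0 ≤ p) (hp1 : p ≤ 1) (F : Finset E) :
    0 ≤ wgt (E := E) p F :=
  mul_nonneg (pow_nonneg hp0 _) (pow_nonneg (by linarith) _)

lemma phiI_nonneg (r : ℕ) (F : Finset E) : 0 ≤ phiI ends r F := by
  unfold phiI; split <;> norm_num

lemma phiI_le_one (r : ℕ) (F : Finset E) : phiI ends r F ≤ 1 := by
  unfold phiI; split <;> norm_num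

lemma phiI_erase_le (r : ℕ) (F : Finset E) (e : E) :
    phiI ends r (F.erase e) ≤ phiI ends r F := by
  unfold phiI
  by_cases h : r ≤ numComponents ends (F.erase e)
  · rw [if_pos h, if_pos (le_trans h (numComponents_erase_le ends))]
  · rw [if_neg h]; split <;> norm_num

lemma sum_wgt (p : ℝ) : ∑ F : Finset E, wgt p F = 1 := by
  classical
  have h := Finset.prod_add (fun _ : E => p) (fun _ : E => 1 - p) Finset.univ
  simp only [Finset.prod_const, Finset.card_univ] at h
  have h1 : ((p + (1 - p)) : ℝ) ^ Fintype.card E = 1 := by norm_num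
  rw [h1, Finset.powerset_univ] at h
  calc ∑ F : Finset E, wgt p F
      = ∑ F : Finset E, p ^ F.card * (1 - p) ^ (Finset.univ \ F).card := by
        apply Finset.sum_congr rfl
        intro F _
        rw [wgt, Finset.card_sdiff_of_subset (Finset.subset_univ F), Finset.card_univ]
    _ = 1 := by rw [← h]

lemma Ufun_one (r : ℕ) : Ufun ends r 1 = if r ≤ Fintype.card V then 1 else 0 := by
  classical
  rw [Ufun, Finset.sum_eq_single Finset.univ]
  · rw [wgt, Finset.card_univ, Nat.sub_self, pow_zero, one_pow, mul_one, mul_one, phiI,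
      numComponents_univ]
  · intro F _ hF
    have hlt : F.card < Fintype.card E := by
      have := Finset.card_le_univ F
      rcases lt_or_eq_of_le this with h | h
      · simpa using h
      · exact absurd (Finset.eq_univ_of_card F (by simpa using h)) hF
    rw [wgt]
    have : (1 - (1:ℝ)) ^ (Fintype.card E - F.card) = 0 := by
      rw [sub_self, zero_pow]; omega
    rw [this, mul_zero, mul_zero]
  · simp

lemma Ufun_zero (r : ℕ) :
    Ufun ends r 0 = if r ≤ numComponents ends (∅ : Finset E) then 1 else 0 := by
  classical
  rw [Ufun, Finset.sum_eq_single ∅]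
  · simp [wgt, phiI]
  · intro F _ hF
    have : F.card ≠ 0 := fun hc => hF (Finset.card_eq_zero.1 hc)
    rw [wgt, zero_pow this, zero_mul, mul_zero]
  · simp

lemma Ufun_eq_zero_of_gt {r : ℕ} (hr : Fintype.card V < r) (p : ℝ) :
    Ufun ends r p = 0 := by
  rw [Ufun]
  apply Finset.sum_eq_zero
  intro F _
  have : ¬ r ≤ numComponents ends F := by
    have := numComponents_le_card ends F
    omega
  rw [phiI, if_neg this, zero_mul]

noncomputable def Uder (r : ℕ) (p : ℝ) : ℝ :=
  ∑ F : Finset E, phiI ends r F *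
    ((F.card : ℝ) * p ^ (F.card - 1) * (1 - p) ^ (Fintype.card E - F.card)
      + p ^ F.card * (((Fintype.card E - F.card : ℕ) : ℝ)
          * (1 - p) ^ (Fintype.card E - F.card - 1) * (-1)))

lemma hasDerivAt_Ufun (r : ℕ) (p : ℝ) :
    HasDerivAt (fun q => Ufun ends r q) (Uder ends r p) p := by
  apply HasDerivAt.fun_sum
  intro F _
  have h1 : HasDerivAt (fun q : ℝ => q ^ F.card)
      ((F.card : ℝ) * p ^ (F.card - 1)) p := hasDerivAt_pow _ _
  have hin : HasDerivAt (fun q : ℝ => 1 - q) (-1 : ℝ) p := by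
    simpa using (hasDerivAt_id p).const_sub 1
  have h2 : HasDerivAt (fun q : ℝ => (1 - q) ^ (Fintype.card E - F.card))
      (((Fintype.card E - F.card : ℕ) : ℝ) * (1 - p) ^ (Fintype.card E - F.card - 1) * (-1))
      p := (hasDerivAt_pow (Fintype.card E - F.card) (1 - p)).comp p hin
  exact (h1.mul h2).const_mul _

lemma key_identity (r : ℕ) (p : ℝ) :
    p * Uder ends r p
      = ∑ F : Finset E,
          (∑ e ∈ F, (phiI ends r F - phiI ends r (F.erase e))) * wgt p F := by
  classical
  set m := Fintype.card E with hm
  have step1 : p * Uder ends r p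
      = (∑ F : Finset E, (∑ e ∈ F, phiI ends r F) * wgt p F)
        - ∑ F : Finset E, phiI ends r F
            * (((m - F.card : ℕ) : ℝ) * (p ^ (F.card + 1) * (1 - p) ^ (m - F.card - 1))) := by
    rw [Uder, Finset.mul_sum, ← Finset.sum_sub_distrib]
    apply Finset.sum_congr rfl
    intro F _
    have hcard : (p : ℝ) * ((F.card : ℝ) * p ^ (F.card - 1)) = (F.card : ℝ) * p ^ F.card := by
      cases hc : F.card with
      | zero => simp
      | succ k => simp [pow_succ]; ring
    have hsum : (∑ _e ∈ F, phiI ends r F) = (F.card : ℝ) * phiI ends r F := by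
      rw [Finset.sum_const, nsmul_eq_mul]
    rw [hsum, wgt]
    linear_combination ((1 - p) ^ (m - F.card) * phiI ends r F) * hcard
  have step2 : (∑ F : Finset E, phiI ends r F
        * (((m - F.card : ℕ) : ℝ) * (p ^ (F.card + 1) * (1 - p) ^ (m - F.card - 1))))
      = ∑ F : Finset E, (∑ e ∈ F, phiI ends r (F.erase e)) * wgt p F := by
    calc (∑ F : Finset E, phiI ends r F
          * (((m - F.card : ℕ) : ℝ) * (p ^ (F.card + 1) * (1 - p) ^ (m - F.card - 1))))
        = ∑ F : Finset E, ∑ _e ∈ Fᶜ,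
            phiI ends r F * (p ^ (F.card + 1) * (1 - p) ^ (m - F.card - 1)) := by
          apply Finset.sum_congr rfl
          intro F _
          rw [Finset.sum_const, nsmul_eq_mul, Finset.card_compl]
          ring
      _ = ∑ F : Finset E, ∑ e ∈ F,
            phiI ends r (F.erase e) * (p ^ F.card * (1 - p) ^ (m - F.card)) := by
          rw [Finset.sum_sigma', Finset.sum_sigma']
          refine Finset.sum_nbij' (fun x => ⟨insert x.2 x.1, x.2⟩)
            (fun x => ⟨x.1.erase x.2, x.2⟩) ?_ ?_ ?_ ?_ ?_
          · intro a _
            simp [Finset.mem_sigma]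
          · intro a ha
            simp only [Finset.mem_sigma, Finset.mem_univ, true_and, Finset.mem_compl] at *
            exact Finset.notMem_erase _ _
          · intro a ha
            simp only [Finset.mem_sigma, Finset.mem_univ, true_and, Finset.mem_compl] at ha
            exact Sigma.ext (by simp [Finset.erase_insert ha]) (by simp)
          · intro a ha
            simp only [Finset.mem_sigma, Finset.mem_univ, true_and] at ha
            exact Sigma.ext (by simp [Finset.insert_erase ha]) (by simp)
          · intro a ha
            simp only [Finset.mem_sigma, Finset.mem_univ, true_and, Finset.mem_compl] at ha
            have h1 : (insert a.2 a.1).erase a.2 = a.1 := Finset.erase_insert ha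
            have h2 : (insert a.2 a.1).card = a.1.card + 1 := Finset.card_insert_of_notMem ha
            have h3 : m - a.1.card - 1 = m - (a.1.card + 1) := by omega
            rw [h1, h2, ← h3]
      _ = ∑ F : Finset E, (∑ e ∈ F, phiI ends r (F.erase e)) * wgt p F := by
          apply Finset.sum_congr rfl
          intro F _
          rw [Finset.sum_mul, wgt]
  rw [step1, step2, ← Finset.sum_sub_distrib]
  apply Finset.sum_congr rfl
  intro F _
  rw [← sub_mul, Finset.sum_sub_distrib]

end Poly
section Glue
set_option linter.unusedSectionVars false
variable {V E : Type} [Fintype V] [DecidableEq V] [Fintype E] [DecidableEq E] (ends : E → Sym2 V)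

lemma Ufun_sub (r : ℕ) (p : ℝ) :
    Ufun ends r p - Ufun ends (r+1) p
      = ∑ F : Finset E, (phiI ends r F - phiI ends (r+1) F) * wgt p F := by
  rw [Ufun, Ufun, ← Finset.sum_sub_distrib]
  apply Finset.sum_congr rfl
  intro F _
  rw [sub_mul]

lemma phiI_sub_eq_zero_of_ne {r : ℕ} {F : Finset E}
    (h : numComponents ends F ≠ r) :
    phiI ends r F - phiI ends (r+1) F = 0 := by
  unfold phiI
  rcases lt_or_gt_of_ne h with h' | h'
  · rw [if_neg (by omega), if_neg (by omega), sub_zero]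
  · rw [if_pos (by omega), if_pos (by omega), sub_self]

lemma pUder_ge (r : ℕ) (K : ℝ)
    (hK : ∀ F : Finset E,
      K * (phiI ends r F - phiI ends (r+1) F)
        ≤ ∑ e ∈ F, (phiI ends r F - phiI ends r (F.erase e)))
    {p : ℝ} (hp0 : 0 ≤ p) (hp1 : p ≤ 1) :
    K * (Ufun ends r p - Ufun ends (r+1) p) ≤ p * Uder ends r p := by
  rw [key_identity, Ufun_sub, Finset.mul_sum]
  apply Finset.sum_le_sum
  intro F _
  rw [← mul_assoc]
  exact mul_le_mul_of_nonneg_right (hK F) (wgt_nonneg hp0 hp1 F)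

lemma pUder_le (r : ℕ) (K : ℝ)
    (hK : ∀ F : Finset E,
      (∑ e ∈ F, (phiI ends r F - phiI ends r (F.erase e)))
        ≤ K * (phiI ends r F - phiI ends (r+1) F))
    {p : ℝ} (hp0 : 0 ≤ p) (hp1 : p ≤ 1) :
    p * Uder ends r p ≤ K * (Ufun ends r p - Ufun ends (r+1) p) := by
  rw [key_identity, Ufun_sub, Finset.mul_sum]
  apply Finset.sum_le_sum
  intro F _
  rw [← mul_assoc]
  exact mul_le_mul_of_nonneg_right (hK F) (wgt_nonneg hp0 hp1 F)

end Glue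

section Gside
set_option linter.unusedSectionVars false
variable {V E : Type} [Fintype V] [DecidableEq V] [Fintype E] [DecidableEq E] (ends : E → Sym2 V)

/-- The key combinatorial estimate for a graph of min cut `c = 2b`. -/
lemma kappa_ge (hnd : ∀ e, ¬ (ends e).IsDiag) {c b : ℕ} (hcb : c = 2 * b)
    (hmin : ∀ A : Finset V, A.Nonempty → Aᶜ.Nonempty → c ≤ cutValue ends A)
    {r : ℕ} (hr : 2 ≤ r) (F : Finset E) :
    ((r * b : ℕ) : ℝ) * (phiI ends r F - phiI ends (r+1) F)
      ≤ ∑ e ∈ F, (phiI ends r F - phiI ends r (F.erase e)) := by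
  classical
  by_cases hcomp : numComponents ends F = r
  swap
  · rw [phiI_sub_eq_zero_of_ne ends hcomp, mul_zero]
    apply Finset.sum_nonneg
    intro e _
    have := phiI_erase_le ends r F e
    linarith
  -- main case: exactly r components
  set G := survGraph ends F with hG
  set comp : V → G.ConnectedComponent := G.connectedComponentMk with hcompdef
  have hFT : Fintype G.ConnectedComponent := Fintype.ofFinite _
  have hcardγ : Fintype.card G.ConnectedComponent = r := by
    rw [← Nat.card_eq_fintype_card]
    exact hcomp
  -- the crossing edges
  set Fcross : Finset E := F.filter (fun e => ¬ (Sym2.map comp (ends e)).IsDiag) with hFcross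
  -- representation of an edge's endpoints
  have hrep : ∀ e : E, ∃ x y : V, ends e = s(x, y) := by
    intro e
    induction (ends e) using Sym2.ind with
    | _ x y => exact ⟨x, y, rfl⟩
  -- each crossing edge contributes 1
  have hcontrib : ∀ e ∈ Fcross, phiI ends r F - phiI ends r (F.erase e) = 1 := by
    intro e he
    rw [hFcross, Finset.mem_filter] at he
    obtain ⟨heF, hediag⟩ := he
    obtain ⟨x, y, hxy⟩ := hrep e
    have hxyne : x ≠ y := by
      have := hnd e
      rw [hxy, Sym2.mk_isDiag_iff] at this
      exact this
    have hcne : comp x ≠ comp y := by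
      rw [hxy, Sym2.map_pair_eq, Sym2.mk_isDiag_iff] at hediag
      exact hediag
    have hlt := numComponents_erase_lt ends heF hxy hxyne hcne
    rw [phiI, phiI, if_pos (le_of_eq hcomp.symm), if_neg (by omega)]
    norm_num
  -- double counting: 2 * |Fcross| = ∑ over components of cut values
  have hdouble : ∑ A : G.ConnectedComponent,
      cutValue ends (Finset.univ.filter (fun v => comp v = A)) = 2 * Fcross.card := by
    have h1 : ∀ A : G.ConnectedComponent,
        cutValue ends (Finset.univ.filter (fun v => comp v = A))
        = ∑ e : E, if crosses ends (Finset.univ.filter (fun v => comp v = A)) e then 1 else 0 := by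
      intro A
      rw [cutValue, cutEdges, Finset.card_filter]
    rw [Finset.sum_congr rfl (fun A _ => h1 A), Finset.sum_comm]
    have h2 : ∀ e : E,
        (∑ A : G.ConnectedComponent,
          if crosses ends (Finset.univ.filter (fun v => comp v = A)) e then (1:ℕ) else 0)
        = if e ∈ Fcross then 2 else 0 := by
      intro e
      obtain ⟨x, y, hxy⟩ := hrep e
      rw [← Finset.card_filter]
      by_cases hec : e ∈ Fcross
      · rw [if_pos hec]
        rw [hFcross, Finset.mem_filter] at hec
        have hcne : comp x ≠ comp y := by
          have := hec.2
          rw [hxy, Sym2.map_pair_eq, Sym2.mk_isDiag_iff] at this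
          exact this
        have hfilt : Finset.univ.filter
            (fun A => crosses ends (Finset.univ.filter (fun v => comp v = A)) e)
            = {comp x, comp y} := by
          ext A
          simp only [Finset.mem_filter, Finset.mem_univ, true_and, Finset.mem_insert,
            Finset.mem_singleton]
          constructor
          · rintro ⟨⟨u, hu, huA⟩, ⟨w, hw, hwA⟩⟩
            rw [Finset.mem_filter] at huA
            rw [hxy, Sym2.mem_iff] at hu
            rcases hu with rfl | rfl
            · exact Or.inl huA.2.symm
            · exact Or.inr huA.2.symm
          · intro hA
            rcases hA with rfl | rfl
            · refine ⟨⟨x, by rw [hxy, Sym2.mem_iff]; tauto, by simp⟩,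
                ⟨y, by rw [hxy, Sym2.mem_iff]; tauto, ?_⟩⟩
              simp only [Finset.mem_filter, Finset.mem_univ, true_and]
              exact fun h => hcne h.symm
            · refine ⟨⟨y, by rw [hxy, Sym2.mem_iff]; tauto, by simp⟩,
                ⟨x, by rw [hxy, Sym2.mem_iff]; tauto, ?_⟩⟩
              simp only [Finset.mem_filter, Finset.mem_univ, true_and]
              exact hcne
        rw [hfilt, Finset.card_insert_of_notMem (by simpa using hcne), Finset.card_singleton]
      · rw [if_neg hec]
        have hsame : comp x = comp y := by
          by_cases heF : e ∈ F
          · by_contra hne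
            apply hec
            rw [hFcross, Finset.mem_filter]
            refine ⟨heF, ?_⟩
            rw [hxy, Sym2.map_pair_eq, Sym2.mk_isDiag_iff]
            exact hne
          · have hxyne : x ≠ y := by
              have := hnd e
              rw [hxy, Sym2.mk_isDiag_iff] at this
              exact this
            have hadj : G.Adj x y := by
              rw [hG, survGraph, SimpleGraph.fromRel_adj]
              exact ⟨hxyne, Or.inl ⟨e, heF, hxy⟩⟩
            exact SimpleGraph.ConnectedComponent.eq.2 hadj.reachable
        have hfilt : Finset.univ.filter
            (fun A => crosses ends (Finset.univ.filter (fun v => comp v = A)) e)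
            = ∅ := by
          ext A
          simp only [Finset.mem_filter, Finset.mem_univ, true_and, Finset.notMem_empty,
            iff_false]
          rintro ⟨⟨u, hu, huA⟩, ⟨w, hw, hwA⟩⟩
          rw [Finset.mem_filter] at huA
          apply hwA
          simp only [Finset.mem_filter, Finset.mem_univ, true_and]
          rw [hxy, Sym2.mem_iff] at hu hw
          have h1 : comp u = comp w := by
            rcases hu with rfl | rfl <;> rcases hw with rfl | rfl <;>
              first | rfl | exact hsame | exact hsame.symm
          rw [← h1, huA.2]
        rw [hfilt, Finset.card_empty]
    rw [Finset.sum_congr rfl (fun e _ => h2 e)]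
    calc (∑ e : E, if e ∈ Fcross then (2:ℕ) else 0) = ∑ _e ∈ Fcross, 2 := by
          rw [← Finset.sum_filter, Finset.filter_univ_mem]
      _ = 2 * Fcross.card := by rw [Finset.sum_const, smul_eq_mul, mul_comm]
  -- min cut lower bound on each component's boundary
  have hmin' : ∀ A : G.ConnectedComponent,
      c ≤ cutValue ends (Finset.univ.filter (fun v => comp v = A)) := by
    intro A
    apply hmin
    · obtain ⟨v, hv⟩ := A.exists_rep
      have hv' : comp v = A := hv
      exact ⟨v, by simp [hv']⟩
    · have : Nontrivial G.ConnectedComponent :=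
        Fintype.one_lt_card_iff_nontrivial.1 (by omega)
      obtain ⟨B, hB⟩ := exists_ne A
      obtain ⟨w, hw⟩ := B.exists_rep
      refine ⟨w, ?_⟩
      have hw' : comp w = B := hw
      simp only [Finset.mem_compl, Finset.mem_filter, Finset.mem_univ, true_and]
      rw [hw']
      exact hB
  have hsum_ge : r * c ≤ 2 * Fcross.card := by
    rw [← hdouble]
    calc r * c = ∑ _A : G.ConnectedComponent, c := by
          rw [Finset.sum_const, Finset.card_univ, hcardγ, smul_eq_mul]
      _ ≤ _ := Finset.sum_le_sum (fun A _ => hmin' A)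
  have hFc : r * b ≤ Fcross.card := by
    have h2 : 2 * (r * b) ≤ 2 * Fcross.card := by
      calc 2 * (r * b) = r * c := by rw [hcb]; ring
        _ ≤ 2 * Fcross.card := hsum_ge
    omega
  have hphi : phiI ends r F - phiI ends (r+1) F = 1 := by
    rw [phiI, phiI, if_pos (le_of_eq hcomp.symm), if_neg (by omega)]
    norm_num
  rw [hphi, mul_one]
  calc ((r * b : ℕ) : ℝ) ≤ (Fcross.card : ℝ) := by exact_mod_cast hFc
    _ = ∑ _e ∈ Fcross, (1:ℝ) := by simp
    _ = ∑ e ∈ Fcross, (phiI ends r F - phiI ends r (F.erase e)) :=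
        (Finset.sum_congr rfl (fun e he => (hcontrib e he).symm))
    _ ≤ ∑ e ∈ F, (phiI ends r F - phiI ends r (F.erase e)) := by
        apply Finset.sum_le_sum_of_subset_of_nonneg (Finset.filter_subset _ _)
        intro e _ _
        have := phiI_erase_le ends r F e
        linarith
end Gside
section Helper
lemma reachable_const {V' : Type} {G : SimpleGraph V'} {β : Sort*} (f : V' → β)
    (hf : ∀ v w, G.Adj v w → f v = f w) {v w : V'} (h : G.Reachable v w) : f v = f w := by
  obtain ⟨p⟩ := h
  induction p with
  | nil => rfl
  | cons h q ih => exact (hf _ _ h).trans ih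
end Helper

section Cyc
set_option linter.unusedSectionVars false
variable {m b : ℕ}
open Fin.NatCast Fin.CommRing


lemma fin_ne_succ (v : Fin (m+2)) : v ≠ v + 1 := by
  intro h
  have h1 : v + 0 = v + 1 := by rw [add_zero]; exact h
  have := add_left_cancel h1
  exact Fin.zero_ne_one this

lemma cyc_ends (e : Fin (m+2) × Fin b) : cycleEnds (m+2) b e = s(e.1, e.1 + 1) := by
  have h : finRotate (m+2) e.1 = e.1 + 1 := finRotate_succ_apply e.1
  rw [cycleEnds, h]

/-- the set of fully failed bundles -/
noncomputable def fullyFailed (F : Finset (Fin (m+2) × Fin b)) : Finset (Fin (m+2)) :=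
  Finset.univ.filter (fun i => ∀ j : Fin b, (i, j) ∈ F)

lemma cyc_adj {F : Finset (Fin (m+2) × Fin b)} {v w : Fin (m+2)}
    (h : (survGraph (cycleEnds (m+2) b) F).Adj v w) :
    (v ∉ fullyFailed F ∧ w = v + 1) ∨ (w ∉ fullyFailed F ∧ v = w + 1) := by
  rw [survGraph, SimpleGraph.fromRel_adj] at h
  obtain ⟨hne, h⟩ := h
  have key : ∀ x y : Fin (m+2), (∃ e, e ∉ F ∧ cycleEnds (m+2) b e = s(x, y)) →
      (x ∉ fullyFailed F ∧ y = x + 1) ∨ (y ∉ fullyFailed F ∧ x = y + 1) := by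
    rintro x y ⟨e, heF, hee⟩
    rw [cyc_ends, Sym2.eq_iff] at hee
    have hnotfull : e.1 ∉ fullyFailed F := by
      rw [fullyFailed, Finset.mem_filter]
      push_neg
      intro _
      exact ⟨e.2, by rwa [Prod.mk.eta]⟩
    rcases hee with ⟨h1, h2⟩ | ⟨h1, h2⟩
    · subst h1
      exact Or.inl ⟨hnotfull, h2.symm⟩
    · subst h1
      exact Or.inr ⟨hnotfull, h2.symm⟩
  rcases h with h | h
  · exact key v w h
  · rcases key w v h with ⟨h1, h2⟩ | ⟨h1, h2⟩
    · exact Or.inr ⟨h1, h2⟩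
    · exact Or.inl ⟨h1, h2⟩

lemma cyc_adj_of_notfull {F : Finset (Fin (m+2) × Fin b)} {v : Fin (m+2)}
    (h : v ∉ fullyFailed F) : (survGraph (cycleEnds (m+2) b) F).Adj v (v + 1) := by
  rw [fullyFailed, Finset.mem_filter] at h
  push_neg at h
  obtain ⟨j, hj⟩ := h (Finset.mem_univ v)
  rw [survGraph, SimpleGraph.fromRel_adj]
  exact ⟨fin_ne_succ v, Or.inl ⟨(v, j), hj, cyc_ends (v, j)⟩⟩

lemma cyc_reach_of_run {F : Finset (Fin (m+2) × Fin b)} :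
    ∀ (d : ℕ) (v : Fin (m+2)), (∀ k < d, v + (k : Fin (m+2)) ∉ fullyFailed F) →
      (survGraph (cycleEnds (m+2) b) F).Reachable v (v + (d : Fin (m+2))) := by
  intro d
  induction d with
  | zero => intro v _; rw [Nat.cast_zero, add_zero]
  | succ d ih =>
    intro v hv
    have h0 : v ∉ fullyFailed F := by
      have := hv 0 (by omega)
      rwa [Nat.cast_zero, add_zero] at this
    have hadj := cyc_adj_of_notfull h0
    have hrest : ∀ k < d, (v + 1) + (k : Fin (m+2)) ∉ fullyFailed F := by
      intro k hk
      have := hv (k + 1) (by omega)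
      have hc : v + ((k:ℕ) + 1 : ℕ) = (v + 1) + (k : Fin (m+2)) := by
        push_cast
        ring
      rwa [hc] at this
    have := ih (v + 1) hrest
    have hc : (v + 1) + (d : Fin (m+2)) = v + ((d + 1 : ℕ) : Fin (m+2)) := by
      push_cast
      ring
    rw [hc] at this
    exact hadj.reachable.trans this

variable {F : Finset (Fin (m+2) × Fin b)}

lemma exd (hS : (fullyFailed F).Nonempty) (v : Fin (m+2)) :
    ∃ d : ℕ, v + (d : Fin (m+2)) ∈ fullyFailed F := by
  obtain ⟨s₀, hs₀⟩ := hS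
  refine ⟨((s₀ - v : Fin (m+2)) : ℕ), ?_⟩
  have h1 : (((s₀ - v : Fin (m+2)) : ℕ) : Fin (m+2)) = s₀ - v := Fin.cast_val_eq_self _
  rw [h1]
  have h2 : v + (s₀ - v) = s₀ := by ring
  rw [h2]
  exact hs₀

noncomputable def nextg (hS : (fullyFailed F).Nonempty) (v : Fin (m+2)) : Fin (m+2) := v + ((Nat.find (exd hS v) : ℕ) : Fin (m+2))

lemma nextg_mem (hS : (fullyFailed F).Nonempty) (v : Fin (m+2)) : nextg hS v ∈ fullyFailed F := Nat.find_spec (exd hS v)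

lemma nextg_of_mem (hS : (fullyFailed F).Nonempty) {v : Fin (m+2)} (hv : v ∈ fullyFailed F) : nextg hS v = v := by
  have h0 : Nat.find (exd hS v) = 0 := by
    rw [Nat.find_eq_zero]
    rwa [Nat.cast_zero, add_zero]
  rw [nextg, h0, Nat.cast_zero, add_zero]

lemma nextg_succ (hS : (fullyFailed F).Nonempty) {v : Fin (m+2)} (hv : v ∉ fullyFailed F) :
    nextg hS (v + 1) = nextg hS v := by
  have hd0 : Nat.find (exd hS v) ≠ 0 := by
    intro h
    apply hv
    have hspec := Nat.find_spec (exd hS v)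
    rwa [h, Nat.cast_zero, add_zero] at hspec
  obtain ⟨d', hd'⟩ : ∃ d', Nat.find (exd hS v) = d' + 1 :=
    ⟨Nat.find (exd hS v) - 1, by omega⟩
  have hfind : Nat.find (exd hS (v + 1)) = d' := by
    rw [Nat.find_eq_iff]
    constructor
    · have hc : (v + 1) + ((d' : ℕ) : Fin (m+2)) = v + (((d' + 1 : ℕ) : ℕ) : Fin (m+2)) := by
        push_cast; ring
      rw [hc, ← hd']
      exact Nat.find_spec (exd hS v)
    · intro k hk
      have hc : (v + 1) + ((k : ℕ) : Fin (m+2)) = v + (((k + 1 : ℕ) : ℕ) : Fin (m+2)) := by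
        push_cast; ring
      rw [hc]
      exact Nat.find_min (exd hS v) (by omega)
  rw [nextg, nextg, hfind, hd']
  push_cast
  ring

lemma nextg_adj_const (hS : (fullyFailed F).Nonempty) {v w : Fin (m+2)} (h : (survGraph (cycleEnds (m+2) b) F).Adj v w) :
    nextg hS v = nextg hS w := by
  rcases cyc_adj h with ⟨h1, rfl⟩ | ⟨h1, rfl⟩
  · exact (nextg_succ hS h1).symm
  · exact nextg_succ hS h1

lemma reach_nextg (hS : (fullyFailed F).Nonempty) (v : Fin (m+2)) :
    (survGraph (cycleEnds (m+2) b) F).Reachable v (nextg hS v) :=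
  cyc_reach_of_run _ v (fun k hk => Nat.find_min (exd hS v) hk)

lemma card_fullyFailed_le (F : Finset (Fin (m+2) × Fin b)) :
    (fullyFailed F).card ≤ numComponents (cycleEnds (m+2) b) F := by
  classical
  rcases Finset.eq_empty_or_nonempty (fullyFailed F) with h | hS
  · rw [h, Finset.card_empty]; omega
  have hFT : Fintype (survGraph (cycleEnds (m+2) b) F).ConnectedComponent := Fintype.ofFinite _
  have hinj : Function.Injective
      (fun i : {x // x ∈ fullyFailed F} =>
        (survGraph (cycleEnds (m+2) b) F).connectedComponentMk i.1) := by
    intro i i' hii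
    have hreach := SimpleGraph.ConnectedComponent.eq.1 hii
    have := reachable_const (nextg hS) (fun v w h => nextg_adj_const hS h) hreach
    rw [nextg_of_mem hS i.2, nextg_of_mem hS i'.2] at this
    exact Subtype.ext this
  have h := Fintype.card_le_of_injective _ hinj
  rw [numComponents, Nat.card_eq_fintype_card]
  rw [Fintype.card_coe] at h
  exact h

lemma numComponents_le_card_fullyFailed {F : Finset (Fin (m+2) × Fin b)}
    (hS : (fullyFailed F).Nonempty) :
    numComponents (cycleEnds (m+2) b) F ≤ (fullyFailed F).card := by
  classical
  have hFT : Fintype (survGraph (cycleEnds (m+2) b) F).ConnectedComponent := Fintype.ofFinite _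
  have hsurj : Function.Surjective
      (fun i : {x // x ∈ fullyFailed F} =>
        (survGraph (cycleEnds (m+2) b) F).connectedComponentMk i.1) := by
    intro A
    obtain ⟨v, hv⟩ := A.exists_rep
    refine ⟨⟨nextg hS v, nextg_mem hS v⟩, ?_⟩
    show (survGraph (cycleEnds (m+2) b) F).connectedComponentMk (nextg hS v) = A
    have h := SimpleGraph.ConnectedComponent.eq.2 (reach_nextg hS v).symm
    rw [h]
    exact hv
  have := Fintype.card_le_of_surjective _ hsurj
  rw [numComponents, Nat.card_eq_fintype_card]
  rwa [Fintype.card_coe] at this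

/-- erasing one copy of a bundle that has a surviving copy does not change the graph -/
lemma surv_erase_partial {F : Finset (Fin (m+2) × Fin b)} {e : Fin (m+2) × Fin b}
    (hpart : e.1 ∉ fullyFailed F) :
    survGraph (cycleEnds (m+2) b) (F.erase e) = survGraph (cycleEnds (m+2) b) F := by
  rw [fullyFailed, Finset.mem_filter] at hpart
  push_neg at hpart
  obtain ⟨j', hj'⟩ := hpart (Finset.mem_univ e.1)
  ext x y
  rw [survGraph, survGraph, SimpleGraph.fromRel_adj, SimpleGraph.fromRel_adj]
  have key : ∀ u v : Fin (m+2), (∃ e', e' ∉ F.erase e ∧ cycleEnds (m+2) b e' = s(u, v)) ↔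
      (∃ e', e' ∉ F ∧ cycleEnds (m+2) b e' = s(u, v)) := by
    intro u v
    constructor
    · rintro ⟨e', he', hee⟩
      by_cases heF : e' ∈ F
      · have : e' = e := by
          by_contra hne
          exact he' (Finset.mem_erase.2 ⟨hne, heF⟩)
        subst this
        refine ⟨(e'.1, j'), hj', ?_⟩
        rw [cyc_ends] at hee ⊢
        exact hee
      · exact ⟨e', heF, hee⟩
    · rintro ⟨e', he', hee⟩
      exact ⟨e', fun hc => he' (Finset.mem_of_mem_erase hc), hee⟩
  rw [key, key]

lemma kappa_le_cycle {r : ℕ} (hr : 2 ≤ r) (F : Finset (Fin (m+2) × Fin b)) :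
    ∑ e ∈ F, (phiI (cycleEnds (m+2) b) r F - phiI (cycleEnds (m+2) b) r (F.erase e))
      ≤ ((r * b : ℕ) : ℝ) * (phiI (cycleEnds (m+2) b) r F - phiI (cycleEnds (m+2) b) (r+1) F) := by
  classical
  rcases lt_trichotomy (numComponents (cycleEnds (m+2) b) F) r with hlt | heq | hgt
  · -- fewer than r components : everything vanishes
    rw [phiI_sub_eq_zero_of_ne (cycleEnds (m+2) b) (by omega), mul_zero]
    apply le_of_eq
    apply Finset.sum_eq_zero
    intro e _
    have h1 : phiI (cycleEnds (m+2) b) r F = 0 := by rw [phiI, if_neg (by omega)]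
    have h2 : phiI (cycleEnds (m+2) b) r (F.erase e) = 0 := by
      rw [phiI, if_neg]
      have := numComponents_erase_le (cycleEnds (m+2) b) (F := F) (e := e)
      omega
    rw [h1, h2, sub_zero]
  · -- exactly r components
    have hphi : phiI (cycleEnds (m+2) b) r F - phiI (cycleEnds (m+2) b) (r+1) F = 1 := by
      rw [phiI, phiI, if_pos (by omega), if_neg (by omega)]
      norm_num
    rw [hphi, mul_one]
    have hterm : ∀ e ∈ F, phiI (cycleEnds (m+2) b) r F - phiI (cycleEnds (m+2) b) r (F.erase e)
        ≤ if e.1 ∈ fullyFailed F then 1 else 0 := by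
      intro e _
      by_cases hfull : e.1 ∈ fullyFailed F
      · rw [if_pos hfull]
        have := phiI_le_one (cycleEnds (m+2) b) r F
        have := phiI_nonneg (cycleEnds (m+2) b) r (F.erase e)
        linarith
      · rw [if_neg hfull]
        have : numComponents (cycleEnds (m+2) b) (F.erase e) = numComponents (cycleEnds (m+2) b) F := by
          rw [numComponents, numComponents, surv_erase_partial hfull]
        rw [phiI, phiI, this]
        norm_num
    calc ∑ e ∈ F, (phiI (cycleEnds (m+2) b) r F - phiI (cycleEnds (m+2) b) r (F.erase e))
        ≤ ∑ e ∈ F, (if e.1 ∈ fullyFailed F then (1:ℝ) else 0) := Finset.sum_le_sum hterm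
      _ = ((F.filter (fun e => e.1 ∈ fullyFailed F)).card : ℝ) := by
          rw [Finset.sum_ite, Finset.sum_const, Finset.sum_const_zero, add_zero,
            nsmul_eq_mul, mul_one]
      _ ≤ (((fullyFailed F) ×ˢ (Finset.univ : Finset (Fin b))).card : ℝ) := by
          have : F.filter (fun e => e.1 ∈ fullyFailed F) ⊆ (fullyFailed F) ×ˢ Finset.univ := by
            intro e he
            rw [Finset.mem_filter] at he
            rw [Finset.mem_product]
            exact ⟨he.2, Finset.mem_univ _⟩
          exact_mod_cast Finset.card_le_card this
      _ ≤ ((r * b : ℕ) : ℝ) := by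
          rw [Finset.card_product, Finset.card_univ, Fintype.card_fin]
          have hsle : (fullyFailed F).card ≤ r := by
            have := card_fullyFailed_le F
            omega
          exact_mod_cast Nat.mul_le_mul_right b hsle
  · -- more than r components : all terms vanish
    rw [phiI_sub_eq_zero_of_ne (cycleEnds (m+2) b) (by omega), mul_zero]
    apply le_of_eq
    apply Finset.sum_eq_zero
    intro e heF
    have h1 : phiI (cycleEnds (m+2) b) r F = 1 := by rw [phiI, if_pos (by omega)]
    have h2 : phiI (cycleEnds (m+2) b) r (F.erase e) = 1 := by
      rw [phiI, if_pos]
      by_cases hfull : e.1 ∈ fullyFailed F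
      · -- a fully failed bundle: still at least r components after giving back one copy
        have hSne : (fullyFailed F).Nonempty := ⟨e.1, hfull⟩
        have hsub : (fullyFailed F).erase e.1 ⊆ fullyFailed (F.erase e) := by
          intro i hi
          rw [Finset.mem_erase] at hi
          rw [fullyFailed, Finset.mem_filter]
          refine ⟨Finset.mem_univ _, fun j => ?_⟩
          have hij : (i, j) ∈ F := by
            have := hi.2
            rw [fullyFailed, Finset.mem_filter] at this
            exact this.2 j
          rw [Finset.mem_erase]
          exact ⟨fun hc => hi.1 (by rw [← hc]), hij⟩
        have hcard : (fullyFailed F).card - 1 ≤ (fullyFailed (F.erase e)).card := by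
          have h1 := Finset.card_le_card hsub
          have h2 := Finset.card_erase_of_mem hfull
          omega
        have hub := numComponents_le_card_fullyFailed hSne
        have hlb := card_fullyFailed_le (F.erase e)
        omega
      · have hsame : numComponents (cycleEnds (m+2) b) (F.erase e)
            = numComponents (cycleEnds (m+2) b) F := by
          rw [numComponents, numComponents, surv_erase_partial hfull]
        omega
    rw [h1, h2, sub_self]

end Cyc
section Analysis

lemma compare_fun (k : ℕ) (f g f' g' : ℝ → ℝ)
    (hf : ∀ p, HasDerivAt f (f' p) p) (hg : ∀ p, HasDerivAt g (g' p) p)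
    (h1 : f 1 = g 1)
    (hineq : ∀ p ∈ Set.Ioc (0:ℝ) 1, p * g' p - p * f' p ≤ (k:ℝ) * (g p - f p)) :
    ∀ p ∈ Set.Ioc (0:ℝ) 1, f p ≤ g p := by
  intro a ha
  obtain ⟨ha0, ha1⟩ := ha
  set D := fun p => g p - f p with hD
  set h := fun p => D p / p ^ k with hh
  have hDder : ∀ p : ℝ, HasDerivAt D (g' p - f' p) p := fun p => (hg p).sub (hf p)
  have hhder : ∀ p ∈ Set.Icc a 1, HasDerivAt h
      (((g' p - f' p) * p ^ k - D p * ((k:ℝ) * p ^ (k-1))) / (p ^ k) ^ 2) p := by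
    intro p hp
    have hp0 : (0:ℝ) < p := lt_of_lt_of_le ha0 hp.1
    exact (hDder p).div (hasDerivAt_pow k p) (by positivity)
  have hanti : AntitoneOn h (Set.Icc a 1) := by
    apply antitoneOn_of_deriv_nonpos (convex_Icc a 1)
    · intro p hp
      exact (hhder p hp).continuousAt.continuousWithinAt
    · intro p hp
      rw [interior_Icc] at hp
      exact ((hhder p (Set.Ioo_subset_Icc_self hp)).differentiableAt).differentiableWithinAt
    · intro p hp
      rw [interior_Icc] at hp
      have hp0 : (0:ℝ) < p := lt_trans ha0 hp.1
      rw [(hhder p (Set.Ioo_subset_Icc_self hp)).deriv]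
      apply div_nonpos_of_nonpos_of_nonneg
      · have hkey := hineq p ⟨hp0, le_of_lt hp.2⟩
        have hnum : ((g' p - f' p) * p ^ k - D p * ((k:ℝ) * p ^ (k-1))) * p
            = p ^ k * ((p * g' p - p * f' p) - (k:ℝ) * D p) := by
          cases k with
          | zero => simp [hD]; ring
          | succ k' =>
            have hpow : p ^ (k' + 1 - 1) * p = p ^ (k' + 1) := by
              rw [Nat.add_sub_cancel, pow_succ]
            calc ((g' p - f' p) * p ^ (k'+1) - D p * (((k'+1:ℕ):ℝ) * p ^ (k'+1-1))) * p
                = (g' p - f' p) * p ^ (k'+1) * p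
                  - ((k'+1:ℕ):ℝ) * D p * (p ^ (k'+1-1) * p) := by ring
              _ = p ^ (k'+1) * ((p * g' p - p * f' p) - ((k'+1:ℕ):ℝ) * D p) := by
                  rw [hpow]; ring
        have hX : (p * g' p - p * f' p) - (k:ℝ) * D p ≤ 0 := by
          have : (k:ℝ) * D p = (k:ℝ) * (g p - f p) := by rw [hD]
          linarith [hkey]
        have hNp : (((g' p - f' p) * p ^ k - D p * ((k:ℝ) * p ^ (k-1))) * p) ≤ 0 := by
          rw [hnum]
          exact mul_nonpos_of_nonneg_of_nonpos (le_of_lt (pow_pos hp0 k)) hX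
        nlinarith [hNp, hp0]
      · exact sq_nonneg _
  have hmem1 : (1:ℝ) ∈ Set.Icc a 1 := ⟨ha1, le_refl 1⟩
  have hmema : a ∈ Set.Icc a 1 := ⟨le_refl a, ha1⟩
  have hmono := hanti hmema hmem1 ha1
  have h1' : h 1 = 0 := by
    rw [hh]
    simp only [one_pow, div_one, hD]
    rw [h1, sub_self]
  rw [h1'] at hmono
  have hpow : (0:ℝ) < a ^ k := pow_pos ha0 k
  have hDa : 0 ≤ D a := by
    have hq := mul_nonneg hmono (le_of_lt hpow)
    rw [hh] at hq
    rwa [div_mul_cancel₀] at hq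
    exact ne_of_gt hpow
  have : 0 ≤ g a - f a := hDa
  linarith [this]

end Analysis
section Main
set_option linter.unusedSectionVars false

lemma failurePr_eq {V E : Type} [Fintype V] [DecidableEq V] [Fintype E] (ends : E → Sym2 V) (r : ℤ) (p : ℝ) :
    failurePr p (Finset.univ.filter (fun F : Finset E => r ≤ (numComponents ends F : ℤ)))
      = Ufun ends r.toNat p := by
  classical
  rw [failurePr, Ufun, Finset.sum_filter]
  apply Finset.sum_congr rfl
  intro F _
  rw [phiI, wgt]
  by_cases h : r ≤ (numComponents ends F : ℤ)
  · rw [if_pos h, if_pos (Int.toNat_le.2 h), one_mul]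
  · rw [if_neg h, if_neg (fun hc => h (Int.toNat_le.1 hc)), zero_mul]

lemma main_aux {V E : Type} [Fintype V] [DecidableEq V] [Fintype E] (ends : E → Sym2 V)
    (hnd : ∀ e, ¬ (ends e).IsDiag)
    (hconn : (survGraph ends (∅ : Finset E)).Connected)
    {c bb : ℕ} (hcb : c = 2 * bb)
    (hmin : ∀ A : Finset V, A.Nonempty → Aᶜ.Nonempty → c ≤ cutValue ends A)
    (n : ℕ) (hn : 2 ≤ n) (hcardV : Fintype.card V = n)
    (ρ : ℕ) (hρ : 2 ≤ ρ) (p : ℝ) (hp0 : 0 ≤ p) (hp1 : p ≤ 1) :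
    Ufun ends ρ p ≤ Ufun (cycleEnds n bb) ρ p := by
  classical
  obtain ⟨m, rfl⟩ : ∃ m, n = m + 2 := ⟨n - 2, by omega⟩
  suffices H : ∀ j ρ', m + 3 ≤ ρ' + j → 2 ≤ ρ' → ∀ q : ℝ, 0 ≤ q → q ≤ 1 →
      Ufun ends ρ' q ≤ Ufun (cycleEnds (m+2) bb) ρ' q by
    exact H (m + 3) ρ (by omega) hρ p hp0 hp1
  intro j
  induction j with
  | zero =>
    intro ρ' hρ'j _ q hq0 hq1
    rw [Ufun_eq_zero_of_gt ends (by omega) q,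
      Ufun_eq_zero_of_gt (cycleEnds (m+2) bb) (by rw [Fintype.card_fin]; omega) q]
  | succ j ih =>
    intro ρ' hρ'j hρ'2 q hq0 hq1
    by_cases hbig : m + 3 ≤ ρ' + j
    · exact ih ρ' hbig hρ'2 q hq0 hq1
    rcases eq_or_lt_of_le hq0 with hq0' | hq0'
    · -- q = 0
      rw [← hq0', Ufun_zero, Ufun_zero, numComponents_empty_of_connected ends hconn,
        if_neg (by omega)]
      split <;> norm_num
    · -- 0 < q ≤ 1 : use the comparison lemma on [q, 1]
      refine compare_fun (ρ' * bb) (fun x => Ufun ends ρ' x)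
        (fun x => Ufun (cycleEnds (m+2) bb) ρ' x)
        (fun x => Uder ends ρ' x) (fun x => Uder (cycleEnds (m+2) bb) ρ' x)
        (fun x => hasDerivAt_Ufun ends ρ' x) (fun x => hasDerivAt_Ufun _ ρ' x)
        ?_ ?_ q ⟨hq0', hq1⟩
      · -- equality at p = 1
        show Ufun ends ρ' 1 = Ufun (cycleEnds (m+2) bb) ρ' 1
        rw [Ufun_one, Ufun_one, hcardV, Fintype.card_fin]
      · -- the differential inequality
        intro x hx
        show x * Uder (cycleEnds (m+2) bb) ρ' x - x * Uder ends ρ' x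
          ≤ ((ρ' * bb : ℕ) : ℝ) * (Ufun (cycleEnds (m+2) bb) ρ' x - Ufun ends ρ' x)
        have hx0 : (0:ℝ) ≤ x := le_of_lt hx.1
        have hx1 : x ≤ 1 := hx.2
        have hG := pUder_ge ends ρ' (((ρ' * bb : ℕ) : ℝ))
          (fun F => kappa_ge ends hnd hcb hmin hρ'2 F) hx0 hx1
        have hC := pUder_le (cycleEnds (m+2) bb) ρ' (((ρ' * bb : ℕ) : ℝ))
          (fun F => kappa_le_cycle hρ'2 F) hx0 hx1
        have hIH := ih (ρ' + 1) (by omega) (by omega) x hx0 hx1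
        have hK : (0:ℝ) ≤ ((ρ' * bb : ℕ) : ℝ) := Nat.cast_nonneg _
        set K := ((ρ' * bb : ℕ) : ℝ)
        set fG := Ufun ends ρ' x
        set fG1 := Ufun ends (ρ' + 1) x
        set fC := Ufun (cycleEnds (m+2) bb) ρ' x
        set fC1 := Ufun (cycleEnds (m+2) bb) (ρ' + 1) x
        have hstep : x * Uder (cycleEnds (m+2) bb) ρ' x - x * Uder ends ρ' x
            ≤ K * (fC - fC1) - K * (fG - fG1) := sub_le_sub hC hG
        have hring : K * (fC - fC1) - K * (fG - fG1) = K * ((fC - fC1) - (fG - fG1)) := by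
          ring
        have hsub : (fC - fC1) - (fG - fG1) ≤ fC - fG := by
          have : fG1 ≤ fC1 := hIH
          linarith
        calc x * Uder (cycleEnds (m+2) bb) ρ' x - x * Uder ends ρ' x
            ≤ K * ((fC - fC1) - (fG - fG1)) := by rw [← hring]; exact hstep
          _ ≤ K * (fC - fG) := mul_le_mul_of_nonneg_left hsub hK
end Main

/-- Let `G` be a connected multigraph on `n ≥ 2` vertices with even minimum
cut value `c`, and let `Cₙ` be the cycle on `n` vertices with `c/2` parallel edges between
consecutive vertices.  If in each graph every edge fails independently with probability
`p ∈ [0,1]`, then for every integer `r` the probability that the surviving subgraph of `G` has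
`r` or more connected components is at most the corresponding probability for `Cₙ`. -/
theorem stmt12 {V E : Type} [Fintype V] [DecidableEq V] [Fintype E]
    (ends : E → Sym2 V) (hnd : ∀ e, ¬ (ends e).IsDiag)
    (hn : 2 ≤ Fintype.card V)
    (hconn : (survGraph ends (∅ : Finset E)).Connected)
    (c : ℕ) (hceven : Even c)
    (hmin : ∀ A : Finset V, A.Nonempty → Aᶜ.Nonempty → c ≤ cutValue ends A)
    (hex : ∃ A : Finset V, A.Nonempty ∧ Aᶜ.Nonempty ∧ cutValue ends A = c)
    (p : ℝ) (hp0 : 0 ≤ p) (hp1 : p ≤ 1) (r : ℤ) :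
    failurePr p (Finset.univ.filter
        (fun F : Finset E => r ≤ (numComponents ends F : ℤ)))
      ≤ failurePr p (Finset.univ.filter
          (fun F : Finset (Fin (Fintype.card V) × Fin (c / 2)) =>
            r ≤ (numComponents (cycleEnds (Fintype.card V) (c / 2)) F : ℤ))) := by
  classical
  have hnV : Nonempty V := Fintype.card_pos_iff.1 (by omega)
  have hnF : Nonempty (Fin (Fintype.card V)) := ⟨⟨0, by omega⟩⟩
  rcases le_or_gt r 1 with hr | hr
  · -- trivial case : both probabilities are 1
    have hL : (Finset.univ.filter (fun F : Finset E => r ≤ (numComponents ends F : ℤ)))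
        = Finset.univ := by
      apply Finset.filter_true_of_mem
      intro F _
      have h1 := one_le_numComponents ends F
      have h1' : (1:ℤ) ≤ (numComponents ends F : ℤ) := by exact_mod_cast h1
      omega
    have hR : (Finset.univ.filter
        (fun F : Finset (Fin (Fintype.card V) × Fin (c / 2)) =>
          r ≤ (numComponents (cycleEnds (Fintype.card V) (c / 2)) F : ℤ)))
        = Finset.univ := by
      apply Finset.filter_true_of_mem
      intro F _
      have h1 := one_le_numComponents (cycleEnds (Fintype.card V) (c / 2)) F
      have h1' : (1:ℤ) ≤ (numComponents (cycleEnds (Fintype.card V) (c / 2)) F : ℤ) := by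
        exact_mod_cast h1
      omega
    rw [hL, hR]
    have e1 : failurePr p (Finset.univ : Finset (Finset E)) = 1 := by
      have h' : failurePr p (Finset.univ : Finset (Finset E)) = ∑ F : Finset E, wgt p F := by
        rw [failurePr]
        apply Finset.sum_congr rfl
        intro F _
        rw [wgt]
      rw [h', sum_wgt]
    have e2 : failurePr p
        (Finset.univ : Finset (Finset (Fin (Fintype.card V) × Fin (c / 2)))) = 1 := by
      have h' : failurePr p
          (Finset.univ : Finset (Finset (Fin (Fintype.card V) × Fin (c / 2))))
          = ∑ F : Finset (Fin (Fintype.card V) × Fin (c / 2)), wgt p F := by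
        rw [failurePr]
        apply Finset.sum_congr rfl
        intro F _
        rw [wgt]
      rw [h', sum_wgt]
    rw [e1, e2]
  · -- main case : r ≥ 2
    rw [failurePr_eq ends r p, failurePr_eq (cycleEnds (Fintype.card V) (c / 2)) r p]
    obtain ⟨t, ht⟩ := hceven
    exact main_aux ends hnd hconn (c := c) (bb := c / 2) (by omega) hmin
      (Fintype.card V) hn rfl r.toNat (by omega) p hp0 hp1
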